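/- Let |n| < 1, (α,p) ∈ K_{|n|}, and let v > u > 0 with p > 1. Then for all vectors a, b ∈ ℝ^d, the quantity e = |v−u|^{p−2} ( (Q_{α,p}(v,u))₁₁ |a|² + 2(Q_{α,p}(v,u))₁₂ a·b + (Q_{α,p}(v,u))₂₂ |b|² ) is nonnegative, and it is symmetric under the simultaneous exchange (v,a) ↔ (u,b). -/

import Mathlib

open MeasureTheory Set Filter Topology

noncomputable section

/-- The critical exponent `P₋(α) = 1 + (2/n²)(1-α)(α - √(α²-n²))`. -/
def Pminus (n a : ℝ) : ℝ := 1 + (2 / n ^ 2) * (1 - a) * (a - Real.sqrt (a ^ 2 - n ^ 2))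

/-- The critical exponent `P₊(α) = 1 + (2/n²)(1-α)(α + √(α²-n²))`. -/
def Pplus (n a : ℝ) : ℝ := 1 + (2 / n ^ 2) * (1 - a) * (a + Real.sqrt (a ^ 2 - n ^ 2))

/-- The admissible set `K_{|n|}` of pairs `(α,p)`. -/
def Kset (n : ℝ) : Set (ℝ × ℝ) :=
  if n = 0 then {q | 0 < q.1 ∧ q.1 ≤ 1 ∧ 1 ≤ q.1 * q.2}
  else {q | |n| ≤ q.1 ∧ q.1 ≤ 1 ∧ Pminus n q.1 ≤ q.2 ∧ q.2 ≤ Pplus n q.1}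

/-- The symmetric matrix `Q_{α,p}(v,u)`, with `γ = n/α`, `Γ = (1-α)/(α(p-1))`,
and the convention `Q_{1,1} = 0`. -/
def Qmat (n a p v u : ℝ) : Matrix (Fin 2) (Fin 2) ℝ :=
  if a = 1 ∧ p = 1 then 0 else
  (p - 1) • !![v ^ (n / a) * (1 + ((1 - a) / (a * (p - 1))) * (u / v - 1)),
      -(v ^ (n / a) + u ^ (n / a)) / 2;
      -(v ^ (n / a) + u ^ (n / a)) / 2,
      u ^ (n / a) * (1 + ((1 - a) / (a * (p - 1))) * (v / u - 1))]

/-- The symmetric matrix `M_{α,p}`, with `γ = n/α`, `Γ = (1-α)/(α(p-1))`,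
and the convention `M_{1,1} = 0`. -/
def Mmat (n a p : ℝ) : Matrix (Fin 2) (Fin 2) ℝ :=
  if a = 1 ∧ p = 1 then 0 else
  (p - 1) • !![(1 : ℝ), -((1 - a) / (a * (p - 1))) + (n / a) / 2;
      -((1 - a) / (a * (p - 1))) + (n / a) / 2,
      ((1 - a) / (a * (p - 1))) * (1 - n / a)]

abbrev Euc (d : ℕ) := EuclideanSpace ℝ (Fin d)

/-- The quadratic form `(X,Y)ᵀ Q (X,Y) = Q₁₁|X|² + 2Q₁₂ X·Y + Q₂₂|Y|²`. -/
def quadQ {d : ℕ} (Q : Matrix (Fin 2) (Fin 2) ℝ) (X Y : Euc d) : ℝ :=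
  Q 0 0 * ‖X‖ ^ 2 + 2 * Q 0 1 * (inner ℝ X Y : ℝ) + Q 1 1 * ‖Y‖ ^ 2

/- ### Auxiliary lemmas -/

lemma aux_sinh_mul_le (c t : ℝ) (hc0 : 0 ≤ c) (hc1 : c ≤ 1) (ht : 0 ≤ t) :
    Real.sinh (c * t) ≤ c * Real.sinh t := by
  have hmono : MonotoneOn (fun x => c * Real.sinh x - Real.sinh (c * x)) (Set.Ici 0) := by
    apply monotoneOn_of_deriv_nonneg (convex_Ici 0)
    · fun_prop
    · fun_prop
    · intro x hx
      rw [interior_Ici] at hx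
      have h2 : HasDerivAt (fun x => Real.sinh (c * x)) (Real.cosh (c * x) * c) x := by
        have := (Real.hasDerivAt_sinh (c * x)).comp x
          (by simpa using (hasDerivAt_id x).const_mul c)
        exact this
      have h1 : HasDerivAt (fun x => c * Real.sinh x - Real.sinh (c * x))
          (c * Real.cosh x - Real.cosh (c * x) * c) x :=
        ((Real.hasDerivAt_sinh x).const_mul c).sub h2
      rw [h1.deriv]
      have : Real.cosh (c * x) ≤ Real.cosh x := by
        rw [Real.cosh_le_cosh, abs_mul]
        calc |c| * |x| ≤ 1 * |x| := by
              apply mul_le_mul_of_nonneg_right _ (abs_nonneg x)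
              rwa [abs_of_nonneg hc0]
          _ = |x| := one_mul _
      nlinarith
  have h0 := hmono (Set.self_mem_Ici) (Set.mem_Ici.2 ht) ht
  simp at h0
  linarith [h0]

lemma aux_sinh_sq_le (g h : ℝ) (hg : |g| ≤ 1) (hh : 0 ≤ h) :
    Real.sinh (g * h) ^ 2 ≤ g ^ 2 * Real.sinh h ^ 2 := by
  have h1 : |Real.sinh (g * h)| = Real.sinh (|g| * h) := by
    rw [Real.abs_sinh, abs_mul, abs_of_nonneg hh]
  have h2 : Real.sinh (|g| * h) ≤ |g| * Real.sinh h :=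
    aux_sinh_mul_le |g| h (abs_nonneg g) hg hh
  have h3 : 0 ≤ Real.sinh h := by
    rw [← Real.sinh_zero]; exact Real.sinh_le_sinh.2 hh
  have h4 : |Real.sinh (g * h)| ≤ |g| * Real.sinh h := h1 ▸ h2
  calc Real.sinh (g * h) ^ 2 = |Real.sinh (g * h)| ^ 2 := (sq_abs _).symm
    _ ≤ (|g| * Real.sinh h) ^ 2 := by
        apply pow_le_pow_left₀ (abs_nonneg _) h4
    _ = g ^ 2 * Real.sinh h ^ 2 := by rw [mul_pow, sq_abs]

lemma aux_rpow_diff_sq_le (u v g : ℝ) (hu : 0 < u) (huv : u < v) (hg : |g| ≤ 1) :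
    (v ^ g - u ^ g) ^ 2 ≤ g ^ 2 * (u * v) ^ (g - 1) * (v - u) ^ 2 := by
  have hv : 0 < v := hu.trans huv
  set m := (Real.log u + Real.log v) / 2 with hm
  set h := (Real.log v - Real.log u) / 2 with hhdef
  have hh : 0 ≤ h := by
    have := Real.log_le_log hu huv.le
    rw [hhdef]; linarith
  have lv : Real.log v = m + h := by rw [hm, hhdef]; ring
  have lu : Real.log u = m - h := by rw [hm, hhdef]; ring
  have expand : ∀ A B : ℝ, Real.exp (A + B) - Real.exp (A - B)
      = Real.exp A * (2 * Real.sinh B) := by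
    intro A B
    rw [Real.sinh_eq, Real.exp_add, Real.exp_sub, Real.exp_neg]
    field_simp
  have e1 : v ^ g - u ^ g = Real.exp (g * m) * (2 * Real.sinh (g * h)) := by
    rw [Real.rpow_def_of_pos hv, Real.rpow_def_of_pos hu, lv, lu, ← expand (g * m) (g * h)]
    congr 2 <;> ring
  have e2 : v - u = Real.exp m * (2 * Real.sinh h) := by
    conv_lhs => rw [← Real.exp_log hv, ← Real.exp_log hu]
    rw [lv, lu, ← expand m h]
  have e3 : (u * v) ^ (g - 1) = Real.exp ((m + m) * (g - 1)) := by
    rw [Real.rpow_def_of_pos (mul_pos hu hv), Real.log_mul (ne_of_gt hu) (ne_of_gt hv),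
      lu, lv]
    congr 1
    ring
  have e4 : Real.exp ((m + m) * (g - 1)) * (Real.exp m) ^ 2 = (Real.exp (g * m)) ^ 2 := by
    rw [sq, sq, ← Real.exp_add, ← Real.exp_add, ← Real.exp_add]
    congr 1
    ring
  have hs := aux_sinh_sq_le g h hg hh
  rw [e1, e2, e3]
  nlinarith [mul_le_mul_of_nonneg_left hs (sq_nonneg (Real.exp (g * m))), e4,
    sq_nonneg (Real.sinh h), sq_nonneg g, Real.exp_pos ((m + m) * (g - 1)), Real.exp_pos m]

/-- A 2×2 quadratic form with nonnegative diagonal and nonnegative determinant is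
nonnegative on nonnegative vectors. -/
lemma aux_quad_nn (A D C x y : ℝ) (hA : 0 ≤ A) (hC : 0 ≤ C) (hD : D ^ 2 ≤ A * C)
    (hx : 0 ≤ x) (hy : 0 ≤ y) : 0 ≤ A * x ^ 2 + 2 * D * (x * y) + C * y ^ 2 := by
  have h1 : |D| ≤ Real.sqrt A * Real.sqrt C := by
    have h2 := Real.sqrt_le_sqrt hD
    rwa [Real.sqrt_sq_eq_abs, Real.sqrt_mul hA] at h2
  nlinarith [sq_nonneg (Real.sqrt A * x - Real.sqrt C * y), Real.sq_sqrt hA,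
    Real.sq_sqrt hC, neg_abs_le D, mul_nonneg hx hy, h1, abs_nonneg D,
    Real.sqrt_nonneg A, Real.sqrt_nonneg C]

/-- Extraction of the key facts from membership in `K_{|n|}`. -/
lemma aux_Kfacts (n α p : ℝ) (hK : (α, p) ∈ Kset n) (hp : 1 < p) :
    0 < α ∧ α ≤ 1 ∧ |n| ≤ α ∧
      n ^ 2 ≤ 4 * α ^ 2 * ((1 - α) / (α * (p - 1))) * (1 - (1 - α) / (α * (p - 1))) := by
  have hq : 0 < p - 1 := by linarith
  by_cases hn : n = 0
  · subst hn
    rw [Kset, if_pos rfl] at hK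
    simp only [Set.mem_setOf_eq] at hK
    obtain ⟨hα0, hα1, hαp⟩ := hK
    have hαq : 0 < α * (p - 1) := mul_pos hα0 hq
    have hΓ0 : 0 ≤ (1 - α) / (α * (p - 1)) := div_nonneg (by linarith) hαq.le
    have hΓ1 : (1 - α) / (α * (p - 1)) ≤ 1 := by
      rw [div_le_one hαq]; nlinarith
    refine ⟨hα0, hα1, by simp [hα0.le], ?_⟩
    have := mul_nonneg hΓ0 (by linarith : (0:ℝ) ≤ 1 - (1 - α) / (α * (p - 1)))
    nlinarith [sq_nonneg α]
  · rw [Kset, if_neg hn] at hK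
    obtain ⟨hnα, hα1, hPm, hPp⟩ := hK
    have hn2 : 0 < n ^ 2 := by positivity
    have hα0 : 0 < α := lt_of_lt_of_le (abs_pos.2 hn) hnα
    set s := Real.sqrt (α ^ 2 - n ^ 2) with hsdef
    have hs2 : s ^ 2 = α ^ 2 - n ^ 2 := by
      rw [hsdef]
      apply Real.sq_sqrt
      nlinarith [abs_nonneg n, sq_abs n]
    have hs0 : 0 ≤ s := Real.sqrt_nonneg _
    have hsα : s < α := by nlinarith
    rw [Pminus] at hPm
    rw [Pplus] at hPp
    have hc : 0 < 1 - α := by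
      by_contra hcon
      push_neg at hcon
      have hk : 0 < 2 / n ^ 2 := by positivity
      nlinarith [mul_pos hk (by linarith : (0:ℝ) < α + s)]
    set c := 1 - α with hcdef
    set q := p - 1 with hqdef
    have hlo : 2 * c * (α - s) ≤ n ^ 2 * q := by
      have h := hPm
      have h2 : 2 / n ^ 2 * c * (α - s) ≤ q := by rw [hqdef]; linarith
      have h3 := mul_le_mul_of_nonneg_left h2 hn2.le
      have h4 : n ^ 2 * (2 / n ^ 2 * c * (α - s)) = 2 * c * (α - s) := by
        field_simp
      linarith [h4 ▸ h3]
    have hhi : n ^ 2 * q ≤ 2 * c * (α + s) := by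
      have h2 : q ≤ 2 / n ^ 2 * c * (α + s) := by rw [hqdef]; linarith
      have h3 := mul_le_mul_of_nonneg_left h2 hn2.le
      have h4 : n ^ 2 * (2 / n ^ 2 * c * (α + s)) = 2 * c * (α + s) := by
        field_simp
      linarith [h4 ▸ h3]
    have hprod : (n ^ 2 * q - 2 * c * (α - s)) * (n ^ 2 * q - 2 * c * (α + s)) ≤ 0 :=
      mul_nonpos_of_nonneg_of_nonpos (by linarith) (by linarith)
    have hs2' : 4 * c ^ 2 * s ^ 2 = 4 * c ^ 2 * α ^ 2 - 4 * c ^ 2 * n ^ 2 := by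
      linear_combination 4 * c ^ 2 * hs2
    have hkey2 : n ^ 2 * q ^ 2 ≤ 4 * c * (α * q - c) := by nlinarith [hprod, hs2', hn2]
    refine ⟨hα0, hα1, hnα, ?_⟩
    have hαq : 0 < α * q := mul_pos hα0 hq
    have hrw : 4 * α ^ 2 * (c / (α * q)) * (1 - c / (α * q))
        = 4 * c * (α * q - c) / q ^ 2 := by
      field_simp
    rw [hrw, le_div_iff₀ (by positivity : (0:ℝ) < q ^ 2)]
    linarith [hkey2]

set_option maxHeartbeats 1000000 in
/-- Scalar facts: diagonal entries nonnegative, off-diagonal nonpositive, determinant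
nonnegative. -/
lemma aux_ADC (n α p v u : ℝ) (hn1 : |n| < 1) (hK : (α, p) ∈ Kset n) (hp : 1 < p)
    (hu : 0 < u) (huv : u < v) :
    0 ≤ (p - 1) * (v ^ (n / α) * (1 + ((1 - α) / (α * (p - 1))) * (u / v - 1))) ∧
    0 ≤ (p - 1) * (u ^ (n / α) * (1 + ((1 - α) / (α * (p - 1))) * (v / u - 1))) ∧
    (p - 1) * (-(v ^ (n / α) + u ^ (n / α)) / 2) ≤ 0 ∧
    ((p - 1) * (-(v ^ (n / α) + u ^ (n / α)) / 2)) ^ 2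
      ≤ ((p - 1) * (v ^ (n / α) * (1 + ((1 - α) / (α * (p - 1))) * (u / v - 1))))
        * ((p - 1) * (u ^ (n / α) * (1 + ((1 - α) / (α * (p - 1))) * (v / u - 1)))) := by
  have hv : 0 < v := hu.trans huv
  have hq : 0 < p - 1 := by linarith
  obtain ⟨hα0, hα1, hnα, hkey⟩ := aux_Kfacts n α p hK hp
  set g := n / α with hgdef
  set Γ := (1 - α) / (α * (p - 1)) with hΓdef
  set V := v ^ g with hV
  set U := u ^ g with hU
  have hgabs : |g| ≤ 1 := by
    rw [hgdef, abs_div, abs_of_pos hα0, div_le_one hα0]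
    exact hnα
  have hΓ0 : 0 ≤ Γ := by
    have : |n| ≤ 1 := hn1.le
    apply div_nonneg (by linarith) (by positivity)
  have hΓkey : g ^ 2 ≤ 4 * Γ * (1 - Γ) := by
    rw [hgdef, div_pow, div_le_iff₀ (by positivity : (0:ℝ) < α ^ 2)]
    linarith [hkey]
  have hΓ1 : Γ ≤ 1 := by nlinarith [sq_nonneg g]
  have hVpos : 0 < V := Real.rpow_pos_of_pos hv g
  have hUpos : 0 < U := Real.rpow_pos_of_pos hu g
  set W := (u * v) ^ (g - 1) with hW
  have hWpos : 0 < W := Real.rpow_pos_of_pos (mul_pos hu hv) _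
  have hVU : V * U = W * (u * v) := by
    rw [hV, hU, hW, ← Real.mul_rpow hv.le hu.le, mul_comm v u,
      Real.rpow_sub (mul_pos hu hv), Real.rpow_one,
      div_mul_cancel₀ _ (mul_pos hu hv).ne']
  have hdiff := aux_rpow_diff_sq_le u v g hu huv hgabs
  rw [← hV, ← hU, ← hW] at hdiff
  clear_value g Γ V U W
  have huvlt : u / v < 1 := (div_lt_one hv).2 huv
  have huvpos : 0 < u / v := by positivity
  have hvu1 : 1 < v / u := (one_lt_div hu).2 huv
  have hA0 : 0 ≤ (p - 1) * (V * (1 + Γ * (u / v - 1))) := by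
    apply mul_nonneg hq.le
    apply mul_nonneg hVpos.le
    have h8 : Γ * (1 - u / v) ≤ 1 * 1 :=
      mul_le_mul hΓ1 (by linarith) (by linarith) zero_le_one
    linarith [h8]
  have hC0 : 0 ≤ (p - 1) * (U * (1 + Γ * (v / u - 1))) := by
    apply mul_nonneg hq.le
    apply mul_nonneg hUpos.le
    have h8 : 0 ≤ Γ * (v / u - 1) := mul_nonneg hΓ0 (by linarith)
    linarith [h8]
  have hD0 : (p - 1) * (-(V + U) / 2) ≤ 0 := by
    apply mul_nonpos_of_nonneg_of_nonpos hq.le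
    linarith [hVpos, hUpos]
  refine ⟨hA0, hC0, hD0, ?_⟩
  have hprod2 : (1 + Γ * (u / v - 1)) * (1 + Γ * (v / u - 1))
      = 1 + Γ * (1 - Γ) * ((v - u) ^ 2 / (u * v)) := by
    field_simp
    ring
  have h5 : V * U * ((1 + Γ * (u / v - 1)) * (1 + Γ * (v / u - 1)))
      = V * U + Γ * (1 - Γ) * (W * (v - u) ^ 2) := by
    rw [hprod2, mul_add, mul_one]
    congr 1
    rw [hVU]
    field_simp
  have eAC : ((p - 1) * (V * (1 + Γ * (u / v - 1)))) * ((p - 1) * (U * (1 + Γ * (v / u - 1))))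
      = (p - 1) ^ 2 * (V * U + Γ * (1 - Γ) * (W * (v - u) ^ 2)) := by
    linear_combination (p - 1) ^ 2 * h5
  have eD : ((p - 1) * (-(V + U) / 2)) ^ 2 = (p - 1) ^ 2 * ((V - U) ^ 2 / 4 + V * U) := by
    ring
  rw [eD, eAC]
  have h6 : (V - U) ^ 2 ≤ 4 * Γ * (1 - Γ) * (W * (v - u) ^ 2) := by
    calc (V - U) ^ 2 ≤ g ^ 2 * W * (v - u) ^ 2 := hdiff
      _ ≤ 4 * Γ * (1 - Γ) * (W * (v - u) ^ 2) := by
          have h9 := mul_le_mul_of_nonneg_right hΓkey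
            (mul_nonneg hWpos.le (sq_nonneg (v - u)))
          linarith [h9]
  have h10 := mul_le_mul_of_nonneg_left h6 (sq_nonneg (p - 1))
  linarith [h10]

set_option maxHeartbeats 1000000 in
/-- for `|n| < 1`, `(α,p) ∈ K_{|n|}` with `p > 1` and `v > u > 0`, the
quantity `e = |v-u|^{p-2} (a,b)ᵀ Q_{α,p}(v,u) (a,b)` is nonnegative for all vectors
`a, b ∈ ℝ^d`, and is symmetric under the exchange `(v,a) ↔ (u,b)`. -/
theorem e_nonneg_and_symmetric (d : ℕ) (hd : 1 ≤ d) (n α p : ℝ) (hn1 : |n| < 1)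
    (hK : (α, p) ∈ Kset n) (hp : 1 < p) (v u : ℝ) (hu : 0 < u) (huv : u < v)
    (a b : Euc d) :
    0 ≤ |v - u| ^ (p - 2) * quadQ (Qmat n α p v u) a b ∧
    |v - u| ^ (p - 2) * quadQ (Qmat n α p v u) a b
      = |u - v| ^ (p - 2) * quadQ (Qmat n α p u v) b a := by
  have hne : ¬(α = 1 ∧ p = 1) := fun hc => by linarith [hc.2]
  have hent : ∀ x y z : ℝ, ((p - 1) • !![x, y; y, z]) 0 0 = (p - 1) * x
      ∧ ((p - 1) • !![x, y; y, z]) 0 1 = (p - 1) * y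
      ∧ ((p - 1) • !![x, y; y, z]) 1 1 = (p - 1) * z := by
    intro x y z
    norm_num [Matrix.smul_apply, Matrix.cons_val_zero, Matrix.cons_val_one,
      Matrix.head_cons, smul_eq_mul]
  -- symmetry
  have hsym : quadQ (Qmat n α p v u) a b = quadQ (Qmat n α p u v) b a := by
    rw [quadQ, quadQ, Qmat, Qmat, if_neg hne, if_neg hne,
      (hent _ _ _).1, (hent _ _ _).2.1, (hent _ _ _).2.2,
      (hent _ _ _).1, (hent _ _ _).2.1, (hent _ _ _).2.2,
      real_inner_comm a b]
    ring
  -- nonnegativity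
  obtain ⟨hA0, hC0, hD0, hdet⟩ := aux_ADC n α p v u hn1 hK hp hu huv
  set A := (p - 1) * (v ^ (n / α) * (1 + ((1 - α) / (α * (p - 1))) * (u / v - 1))) with hA
  set C := (p - 1) * (u ^ (n / α) * (1 + ((1 - α) / (α * (p - 1))) * (v / u - 1))) with hC
  set D := (p - 1) * (-(v ^ (n / α) + u ^ (n / α)) / 2) with hD
  have hDsq : D ^ 2 ≤ A * C := hdet
  have hquad : quadQ (Qmat n α p v u) a b
      = A * ‖a‖ ^ 2 + 2 * D * (inner ℝ a b : ℝ) + C * ‖b‖ ^ 2 := by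
    rw [quadQ, Qmat, if_neg hne, (hent _ _ _).1, (hent _ _ _).2.1, (hent _ _ _).2.2,
      hA, hC, hD]
    try ring
  clear_value A C D
  have hinner : (inner ℝ a b : ℝ) ≤ ‖a‖ * ‖b‖ := real_inner_le_norm a b
  have hqnn : 0 ≤ quadQ (Qmat n α p v u) a b := by
    rw [hquad]
    have h7 := aux_quad_nn A D C ‖a‖ ‖b‖ hA0 hC0 hDsq (norm_nonneg a) (norm_nonneg b)
    have h8 := mul_le_mul_of_nonpos_left hinner hD0
    linarith [h7, h8]
  exact ⟨mul_nonneg (Real.rpow_nonneg (abs_nonneg _) _) hqnn,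
    by rw [abs_sub_comm v u, hsym]⟩
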